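/- (Correctness of normalization rule NF7) Let A, B, C be atomic concepts, R_A a fresh role and A' a fresh atomic concept. Then: (1) every interpretation I satisfying A ⊓ B ⊑ C can be extended (by interpreting R_A and A' appropriately, without changing Δ^I or the interpretation of old symbols) to an interpretation satisfying all of A ⊑ ∃R_A.⊤, B ⊑ ∀R_A.A', and ∃R_A.A' ⊑ C; and (2) every interpretation satisfying those three axioms also satisfies A ⊓ B ⊑ C. -/

import Mathlib

namespace ALC

/-- A Boolean operator: an arity together with a Boolean function of that arity. -/
structure BoolOp where
  arity : ℕ
  fn : (Fin arity → Bool) → Bool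

/-- ALC concepts over atomic concepts `A` and roles `R`, with arbitrary Boolean operators. -/
inductive Concept (A R : Type) : Type
  | atom : A → Concept A R
  | op : (o : BoolOp) → (Fin o.arity → Concept A R) → Concept A R
  | ex : R → Concept A R → Concept A R
  | all : R → Concept A R → Concept A R

def topOp : BoolOp := ⟨0, fun _ => true⟩
def botOp : BoolOp := ⟨0, fun _ => false⟩
def negOp : BoolOp := ⟨1, fun v => !(v 0)⟩
def andOp : BoolOp := ⟨2, fun v => v 0 && v 1⟩
def orOp : BoolOp := ⟨2, fun v => v 0 || v 1⟩
def xorOp : BoolOp := ⟨2, fun v => xor (v 0) (v 1)⟩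

namespace Concept
variable {A R : Type}

def top : Concept A R := .op topOp Fin.elim0
def bot : Concept A R := .op botOp Fin.elim0
def neg (C : Concept A R) : Concept A R := .op negOp ![C]
def inf (C D : Concept A R) : Concept A R := .op andOp ![C, D]
def sup (C D : Concept A R) : Concept A R := .op orOp ![C, D]

/-- The atomic concept `a` occurs in the concept. -/
def atomOcc (a : A) : Concept A R → Prop
  | .atom b => b = a
  | .op _ cs => ∃ i, (cs i).atomOcc a
  | .ex _ c => c.atomOcc a
  | .all _ c => c.atomOcc a

/-- The role `r` occurs in the concept. -/
def roleOcc (r : R) : Concept A R → Prop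
  | .atom _ => False
  | .op _ cs => ∃ i, (cs i).roleOcc r
  | .ex s c => s = r ∨ c.roleOcc r
  | .all s c => s = r ∨ c.roleOcc r

/-- All Boolean operators of the concept belong to `B`. -/
def opsIn (B : Set BoolOp) : Concept A R → Prop
  | .atom _ => True
  | .op o cs => o ∈ B ∧ ∀ i, (cs i).opsIn B
  | .ex _ c => c.opsIn B
  | .all _ c => c.opsIn B

/-- No universal quantifier occurs. -/
def noAll : Concept A R → Prop
  | .atom _ => True
  | .op _ cs => ∀ i, (cs i).noAll
  | .ex _ c => c.noAll
  | .all _ _ => False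

/-- No existential quantifier occurs. -/
def noEx : Concept A R → Prop
  | .atom _ => True
  | .op _ cs => ∀ i, (cs i).noEx
  | .ex _ _ => False
  | .all _ c => c.noEx

end Concept

/-- An ALC interpretation. -/
structure Interp (A R Ind : Type) where
  Δ : Type
  nonempty : Nonempty Δ
  conc : A → Set Δ
  role : R → Δ → Δ → Prop
  ind : Ind → Δ

open Classical in
/-- The extension of a concept in an interpretation. -/
noncomputable def Interp.sem {A R Ind : Type} (I : Interp A R Ind) : Concept A R → Set I.Δ
  | .atom a => I.conc a
  | .op o cs => {x | o.fn (fun i => decide (x ∈ I.sem (cs i))) = true}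
  | .ex r c => {x | ∃ y, I.role r x y ∧ y ∈ I.sem c}
  | .all r c => {x | ∀ y, I.role r x y → y ∈ I.sem c}

/-- Satisfaction of a GCI `C ⊑ D`. -/
def Interp.satAx {A R Ind : Type} (I : Interp A R Ind) (ax : Concept A R × Concept A R) : Prop :=
  I.sem ax.1 ⊆ I.sem ax.2

/-- Satisfaction of a TBox. -/
def Interp.satT {A R Ind : Type} (I : Interp A R Ind) (T : Set (Concept A R × Concept A R)) : Prop :=
  ∀ ax ∈ T, I.satAx ax

/-- ABox assertions. -/
inductive Assertion (A R Ind : Type)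
  | conc : Concept A R → Ind → Assertion A R Ind
  | role : R → Ind → Ind → Assertion A R Ind

/-- Satisfaction of an ABox assertion. -/
noncomputable def Interp.satA {A R Ind : Type} (I : Interp A R Ind) : Assertion A R Ind → Prop
  | .conc C a => I.ind a ∈ I.sem C
  | .role r a b => I.role r (I.ind a) (I.ind b)

/-- Satisfaction of an ABox. -/
def Interp.satAB {A R Ind : Type} (I : Interp A R Ind) (Ab : Set (Assertion A R Ind)) : Prop :=
  ∀ x ∈ Ab, I.satA x



lemma sem_inf_atoms {A R Ind : Type} (I : Interp A R Ind) (a b : A) (x : I.Δ) :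
    x ∈ I.sem ((Concept.atom a).inf (Concept.atom b)) ↔ x ∈ I.conc a ∧ x ∈ I.conc b := by
  simp [Concept.inf, Interp.sem, andOp, Matrix.cons_val_zero, Matrix.cons_val_one]
  classical
  exact ⟨fun h => ⟨@of_decide_eq_true _ _ h.1, @of_decide_eq_true _ _ h.2⟩,
    fun h => ⟨@decide_eq_true _ _ h.1, @decide_eq_true _ _ h.2⟩⟩

/-- Correctness of normalization rule NF7. -/
theorem stmt7 {A R Ind : Type} [DecidableEq A] [DecidableEq R]
    (a b c a' : A) (rA : R) (h1 : a' ≠ a) (h2 : a' ≠ b) (h3 : a' ≠ c) :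
    (∀ I : Interp A R Ind,
      I.satAx ((Concept.atom a).inf (Concept.atom b), Concept.atom c) →
      ∃ (ra : I.Δ → I.Δ → Prop) (s : Set I.Δ),
        (let J : Interp A R Ind :=
          { Δ := I.Δ, nonempty := I.nonempty,
            conc := Function.update I.conc a' s,
            role := Function.update I.role rA ra,
            ind := I.ind }
        J.satAx (Concept.atom a, Concept.ex rA Concept.top) ∧
        J.satAx (Concept.atom b, Concept.all rA (Concept.atom a')) ∧
        J.satAx (Concept.ex rA (Concept.atom a'), Concept.atom c)))
    ∧
    (∀ J : Interp A R Ind,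
        J.satAx (Concept.atom a, Concept.ex rA Concept.top) →
        J.satAx (Concept.atom b, Concept.all rA (Concept.atom a')) →
        J.satAx (Concept.ex rA (Concept.atom a'), Concept.atom c) →
        J.satAx ((Concept.atom a).inf (Concept.atom b), Concept.atom c)) := by
  constructor
  · intro I hI
    refine ⟨fun x y => x = y ∧ x ∈ I.conc a, I.conc b, ?_, ?_, ?_⟩
    · intro x hx
      simp only [Interp.sem, Set.mem_setOf_eq]
      refine ⟨x, ?_, ?_⟩
      · simp only [Function.update_self]
        simp only [Interp.sem, Set.mem_setOf_eq] at hx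
        rw [Function.update_of_ne (Ne.symm h1)] at hx
        exact ⟨trivial, hx⟩
      · simp [Interp.sem, Concept.top, topOp]
    · intro x hx
      simp only [Interp.sem, Set.mem_setOf_eq] at hx
      rw [Function.update_of_ne (Ne.symm h2)] at hx
      intro y hy
      simp only [Function.update_self] at hy
      simp only [Interp.sem, Set.mem_setOf_eq]
      rw [Function.update_self]
      rw [← hy.1]
      exact hx
    · rintro x ⟨y, hr, hy⟩
      simp only [Function.update_self] at hr
      simp only [Interp.sem, Set.mem_setOf_eq, Function.update_self] at hy
      obtain ⟨rfl, hxa⟩ := hr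
      have : x ∈ I.sem ((Concept.atom a).inf (Concept.atom b)) :=
        (sem_inf_atoms I a b x).2 ⟨hxa, hy⟩
      have hc := hI this
      simp only [Interp.sem, Set.mem_setOf_eq] at hc ⊢
      rwa [Function.update_of_ne (Ne.symm h3)]
  · intro J hA hB hE x hx
    rw [sem_inf_atoms] at hx
    obtain ⟨y, hr, _⟩ := hA hx.1
    exact hE ⟨y, hr, hB hx.2 y hr⟩

end ALC
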